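/- Let λ be a nonzero real number and m a positive integer. For every n ≥ 0, the fully degenerate Dowling polynomials are expressed in terms of the fully degenerate Bell polynomials by d_{m,λ}(n,x) = Σ_{k=0}^{n} { Σ_{j=k}^{n} S_{1,λ}(j,k) W_{m,λ}(n,j) } φ_{k,λ}(x) as polynomials in x. -/

import Mathlib

open Nat PowerSeries Finset

noncomputable section

/-- λ-falling factorial (x)_{n,λ} = x(x−λ)···(x−(n−1)λ). -/
def dfall (l x : ℝ) (n : ℕ) : ℝ := ∏ i ∈ range n, (x - i * l)

/-- degenerate exponential e_λ^x(t) = Σ (x)_{n,λ} t^n/n! as a formal power series. -/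
def degExp (l x : ℝ) : PowerSeries ℝ := PowerSeries.mk fun n => dfall l x n / n !

/-- degenerate logarithm log_λ(1+t) = Σ_{n≥1} (∏_{j=1}^{n−1}(λ−j)) t^n/n!. -/
def degLog (l : ℝ) : PowerSeries ℝ :=
  PowerSeries.mk fun n => if n = 0 then 0 else (∏ j ∈ range (n - 1), (l - (j + 1))) / n !

/-- composition Σ_k a_k f^k, valid when f has zero constant term. -/
def psComp (a : ℕ → ℝ) (f : PowerSeries ℝ) : PowerSeries ℝ :=
  PowerSeries.mk fun n => ∑ k ∈ range (n + 1), a k * PowerSeries.coeff n (f ^ k)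

/-- e_λ^x(f), the degenerate exponential composed with f (f with zero constant term). -/
def degExpComp (l x : ℝ) (f : PowerSeries ℝ) : PowerSeries ℝ :=
  psComp (fun k => dfall l x k / k !) f

/-- degenerate Stirling numbers of the second kind. -/
def dS2 (l : ℝ) (n k : ℕ) : ℝ :=
  (n ! : ℝ) / k ! * PowerSeries.coeff n ((degExp l 1 - 1) ^ k)

/-- degenerate Stirling numbers of the first kind. -/
def dS1 (l : ℝ) (n k : ℕ) : ℝ :=
  (n ! : ℝ) / k ! * PowerSeries.coeff n (degLog l ^ k)

/-- (signed) Stirling numbers of the first kind: coefficients of x(x-1)···(x-n+1). -/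
def sS1 (n k : ℕ) : ℝ := (descPochhammer ℝ n).coeff k

/-- fully degenerate Bell polynomial φ_{n,λ}(x). -/
def dBell (l : ℝ) (n : ℕ) (x : ℝ) : ℝ := ∑ k ∈ range (n + 1), dS2 l n k * dfall l x k

/-- degenerate Whitney numbers of the second kind. -/
def dW (m : ℕ) (l : ℝ) (n k : ℕ) : ℝ :=
  (n ! : ℝ) / k ! *
    PowerSeries.coeff n (degExp l 1 * ((degExp l (m : ℝ) - 1) * PowerSeries.C (R := ℝ) (1 / m)) ^ k)

/-- fully degenerate Dowling polynomial d_{m,λ}(n,x). -/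
def dDowling (m : ℕ) (l : ℝ) (n : ℕ) (x : ℝ) : ℝ :=
  ∑ k ∈ range (n + 1), dW m l n k * dfall l x k

/-- division of a power series by t (coefficient shift). -/
def divT (f : PowerSeries ℝ) : PowerSeries ℝ :=
  PowerSeries.mk fun n => PowerSeries.coeff (n + 1) f

/-- degenerate Bernoulli polynomials β_{n,λ}(x): (t/(e_λ(t)−1)) e_λ^x(t) = Σ β_{n,λ}(x) tⁿ/n!. -/
def dBernoulliPoly (l : ℝ) (n : ℕ) (x : ℝ) : ℝ :=
  (n ! : ℝ) * PowerSeries.coeff n ((divT (degExp l 1 - 1))⁻¹ * degExp l x)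

/-- the λ-falling factorial polynomial (x)_{k,λ}. -/
def dfallPoly (l : ℝ) (k : ℕ) : Polynomial ℝ :=
  ∏ i ∈ range k, (Polynomial.X - Polynomial.C (i * l))

/-- degenerate poly-Bell polynomials B^{(r)}_{n,λ}(x). -/
def dPolyBell (r : ℤ) (l : ℝ) (n : ℕ) (x : ℝ) : ℝ :=
  (n ! : ℝ) * PowerSeries.coeff n
    (divT (psComp (fun k => if k = 0 then 0 else dfall l 1 k / ((k - 1)! * (k : ℝ) ^ r))
        (degLog l)) *
      (divT (degExp l 1 - 1))⁻¹ * degExp l x)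

/-- degenerate Bernoulli polynomials of the second kind b_{n,λ}(x). -/
def dBern2 (l : ℝ) (n : ℕ) (x : ℝ) : ℝ :=
  (n ! : ℝ) *
    PowerSeries.coeff n ((divT (degLog l))⁻¹ * PowerSeries.mk fun j => dfall 1 x j / j !)


lemma coeff_degExp (l x : ℝ) (n : ℕ) : coeff n (degExp l x) = dfall l x n / n ! := by
  simp [degExp]

lemma dfall_succ (l x : ℝ) (n : ℕ) : dfall l x (n + 1) = dfall l x n * (x - n * l) := by
  simp [dfall, prod_range_succ]

lemma constF (l : ℝ) : constantCoeff (degExp l 1 - 1) = 0 := by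
  simp [degExp, dfall]

lemma constL (l : ℝ) : constantCoeff (degLog l) = 0 := by
  simp [degLog]

lemma coeff_pow_zero_of_lt {f : PowerSeries ℝ} (hf : constantCoeff f = 0) {j k : ℕ}
    (h : j < k) : coeff j (f ^ k) = 0 := by
  obtain ⟨g, rfl⟩ := PowerSeries.X_dvd_iff.mpr hf
  rw [mul_pow, coeff_X_pow_mul', if_neg (by omega)]

lemma coeff_aux (c : ℝ) (f : PowerSeries ℝ) (n : ℕ) :
    coeff n ((1 + C c * X) * d⁄dX ℝ f) =
      (n + 1 : ℝ) * coeff (n + 1) f + c * n * coeff n f := by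
  rw [add_mul, one_mul, map_add, coeff_derivative, mul_assoc, coeff_C_mul]
  cases n with
  | zero => simp [PowerSeries.coeff_zero_eq_constantCoeff]
  | succ n =>
    rw [coeff_succ_X_mul, coeff_derivative]
    push_cast
    ring

lemma hE (l : ℝ) : (1 + C l * X) * d⁄dX ℝ (degExp l 1) = degExp l 1 := by
  ext n
  rw [coeff_aux]
  simp only [coeff_degExp, dfall_succ, factorial_succ]
  have h1 : ((n + 1) * n ! : ℕ) ≠ 0 := by positivity
  field_simp
  push_cast
  ring

lemma coeff_degLog (l : ℝ) (n : ℕ) :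
    coeff (n + 1) (degLog l) = (∏ j ∈ range n, (l - (j + 1))) / (n + 1)! := by
  simp [degLog]

lemma hL (l : ℝ) : (1 + C 1 * X) * d⁄dX ℝ (degLog l) = C l * degLog l + 1 := by
  ext n
  rw [coeff_aux, map_add, coeff_C_mul]
  cases n with
  | zero => simp [degLog]
  | succ n =>
    rw [coeff_one, if_neg (by omega), show n + 1 + 1 = (n + 1) + 1 by rfl,
      coeff_degLog, coeff_degLog, prod_range_succ, factorial_succ (n + 1)]
    have h1 : ((n + 1)! : ℝ) ≠ 0 := by positivity
    have h2 : ((n + 1 : ℕ) + 1 : ℝ) ≠ 0 := by positivity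
    push_cast
    field_simp
    ring

def CC (l : ℝ) (i k : ℕ) : ℝ := coeff k ((degExp l 1 - 1) ^ i)
def AA (l : ℝ) (k n : ℕ) : ℝ := coeff n (degLog l ^ k)

lemma keyF (l : ℝ) (i : ℕ) :
    (1 + C l * X) * d⁄dX ℝ ((degExp l 1 - 1) ^ (i + 1)) =
      C ((i : ℝ) + 1) * ((degExp l 1 - 1) ^ (i + 1) + (degExp l 1 - 1) ^ i) := by
  have hC : C ((i : ℝ) + 1) = ((i + 1 : ℕ) : PowerSeries ℝ) := by
    push_cast; rw [map_add, map_one, map_natCast]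
  have hdF : d⁄dX ℝ ((degExp l 1 - 1) ^ (i + 1)) =
      C ((i : ℝ) + 1) * (degExp l 1 - 1) ^ i * d⁄dX ℝ (degExp l 1) := by
    rw [Derivation.leibniz_pow, hC]
    simp only [smul_eq_mul, nsmul_eq_mul, Nat.add_sub_cancel, map_sub, Derivation.map_one_eq_zero,
      sub_zero]
    ring
  calc (1 + C l * X) * d⁄dX ℝ ((degExp l 1 - 1) ^ (i + 1))
      = C ((i : ℝ) + 1) * (degExp l 1 - 1) ^ i * ((1 + C l * X) * d⁄dX ℝ (degExp l 1)) := by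
        rw [hdF]; ring
    _ = C ((i : ℝ) + 1) * (degExp l 1 - 1) ^ i * (degExp l 1) := by rw [hE]
    _ = C ((i : ℝ) + 1) * (degExp l 1 - 1) ^ i * ((degExp l 1 - 1) + 1) := by ring
    _ = C ((i : ℝ) + 1) * ((degExp l 1 - 1) ^ (i + 1) + (degExp l 1 - 1) ^ i) := by ring

lemma recC (l : ℝ) (i k : ℕ) :
    (k + 1 : ℝ) * CC l (i + 1) (k + 1) + l * k * CC l (i + 1) k
      = ((i : ℝ) + 1) * (CC l (i + 1) k + CC l i k) := by
  have h := congrArg (coeff k) (keyF l i)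
  have h2 : (coeff k) (C ((i : ℝ) + 1) * ((degExp l 1 - 1) ^ (i + 1) + (degExp l 1 - 1) ^ i))
      = ((i : ℝ) + 1) * (CC l (i + 1) k + CC l i k) := by
    rw [coeff_C_mul, map_add]; simp [CC, mul_add]
  rw [coeff_aux, h2] at h
  simpa [CC] using h

lemma keyL (l : ℝ) (k : ℕ) :
    (1 + C 1 * X) * d⁄dX ℝ (degLog l ^ (k + 1)) =
      C ((k : ℝ) + 1) * (C l * degLog l ^ (k + 1) + degLog l ^ k) := by
  have hC : C ((k : ℝ) + 1) = ((k + 1 : ℕ) : PowerSeries ℝ) := by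
    push_cast; rw [map_add, map_one, map_natCast]
  have hdL : d⁄dX ℝ (degLog l ^ (k + 1)) =
      C ((k : ℝ) + 1) * degLog l ^ k * d⁄dX ℝ (degLog l) := by
    rw [Derivation.leibniz_pow, hC]
    simp only [smul_eq_mul, nsmul_eq_mul, Nat.add_sub_cancel]
    ring
  calc (1 + C 1 * X) * d⁄dX ℝ (degLog l ^ (k + 1))
      = C ((k : ℝ) + 1) * degLog l ^ k * ((1 + C 1 * X) * d⁄dX ℝ (degLog l)) := by
        rw [hdL]; ring
    _ = C ((k : ℝ) + 1) * degLog l ^ k * (C l * degLog l + 1) := by rw [hL]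
    _ = C ((k : ℝ) + 1) * (C l * degLog l ^ (k + 1) + degLog l ^ k) := by ring

lemma recA (l : ℝ) (k n : ℕ) :
    (n + 1 : ℝ) * AA l (k + 1) (n + 1) + n * AA l (k + 1) n
      = ((k : ℝ) + 1) * (l * AA l (k + 1) n + AA l k n) := by
  have h := congrArg (coeff n) (keyL l k)
  have h2 : (coeff n) (C ((k : ℝ) + 1) * (C l * degLog l ^ (k + 1) + degLog l ^ k))
      = ((k : ℝ) + 1) * (l * AA l (k + 1) n + AA l k n) := by
    rw [coeff_C_mul, map_add, coeff_C_mul]; simp [AA, mul_add]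
  rw [coeff_aux, h2] at h
  simp only [AA] at h ⊢
  linear_combination h

lemma CC_zero_right (l : ℝ) (i : ℕ) : CC l (i + 1) 0 = 0 := by
  simp [CC, PowerSeries.coeff_zero_eq_constantCoeff, map_pow, constF]

lemma CC_lt (l : ℝ) {i k : ℕ} (h : k < i) : CC l i k = 0 :=
  coeff_pow_zero_of_lt (constF l) h

lemma AA_lt (l : ℝ) {k n : ℕ} (h : n < k) : AA l k n = 0 :=
  coeff_pow_zero_of_lt (constL l) h

lemma CC_zero_left (l : ℝ) (k : ℕ) : CC l 0 k = if k = 0 then 1 else 0 := by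
  simp [CC, coeff_one]

lemma AA_zero_left (l : ℝ) (n : ℕ) : AA l 0 n = if n = 0 then 1 else 0 := by
  simp [AA, coeff_one]

lemma orthT (l : ℝ) : ∀ j i, (∑ k ∈ range (j + 1), CC l i k * AA l k j)
    = if i = j then 1 else 0 := by
  intro j
  induction j with
  | zero =>
    intro i
    cases i with
    | zero => simp [CC_zero_left, AA_zero_left]
    | succ i => simp [CC_zero_right, Nat.succ_ne_zero]
  | succ j ih =>
    intro i
    cases i with
    | zero =>
      rw [if_neg (by omega), Finset.sum_eq_single_of_mem 0 (by simp)]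
      · rw [CC_zero_left, if_pos rfl, AA_zero_left, if_neg (by omega), one_mul]
      · intro k _ hk
        rw [CC_zero_left, if_neg hk, zero_mul]
    | succ i =>
      have hne : ((j : ℝ) + 1) ≠ 0 := by positivity
      have h1 : ∀ k : ℕ, ((j : ℝ) + 1) * AA l (k + 1) (j + 1)
          = ((k : ℝ) + 1) * (l * AA l (k + 1) j + AA l k j) - (j : ℝ) * AA l (k + 1) j :=
        fun k => by linear_combination recA l k j
      have key : ((j : ℝ) + 1) * (∑ k ∈ range (j + 2), CC l (i + 1) k * AA l k (j + 1))
          = ((i : ℝ) + 1 - j) * (if i + 1 = j then 1 else 0)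
            + ((i : ℝ) + 1) * (if i = j then 1 else 0) := by
        calc ((j : ℝ) + 1) * (∑ k ∈ range (j + 2), CC l (i + 1) k * AA l k (j + 1))
            = (∑ k ∈ range (j + 1),
                CC l (i + 1) (k + 1) * (((j : ℝ) + 1) * AA l (k + 1) (j + 1)))
              + ((j : ℝ) + 1) * (CC l (i + 1) 0 * AA l 0 (j + 1)) := by
              rw [Finset.mul_sum, Finset.sum_range_succ']
              exact congrArg₂ (· + ·) (Finset.sum_congr rfl fun k _ => by ring) rfl
          _ = ∑ k ∈ range (j + 1),
                ((((i : ℝ) + 1) * (CC l (i + 1) k + CC l i k) - l * k * CC l (i + 1) k)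
                    * AA l k j
                  + (((k : ℝ) + 1) * l - j) * CC l (i + 1) (k + 1) * AA l (k + 1) j) := by
              rw [CC_zero_right, zero_mul, mul_zero, add_zero]
              refine Finset.sum_congr rfl fun k _ => ?_
              linear_combination CC l (i + 1) (k + 1) * recA l k j + AA l k j * recC l i k
          _ = (∑ k ∈ range (j + 1),
                (((i : ℝ) + 1) * (CC l (i + 1) k + CC l i k) - l * k * CC l (i + 1) k)
                  * AA l k j)
              + ∑ k ∈ range (j + 1),
                (((k : ℝ) + 1) * l - j) * CC l (i + 1) (k + 1) * AA l (k + 1) j := by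
              rw [Finset.sum_add_distrib]
          _ = (∑ k ∈ range (j + 1),
                (((i : ℝ) + 1) * (CC l (i + 1) k + CC l i k) - l * k * CC l (i + 1) k)
                  * AA l k j)
              + ∑ k ∈ range (j + 1),
                ((k : ℝ) * l - j) * CC l (i + 1) k * AA l k j := by
              congr 1
              have h2 := Finset.sum_range_succ'
                (fun k => ((k : ℝ) * l - (j : ℝ)) * CC l (i + 1) k * AA l k j) (j + 1)
              rw [Finset.sum_range_succ
                (fun k => ((k : ℝ) * l - (j : ℝ)) * CC l (i + 1) k * AA l k j) (j + 1)] at h2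
              simp only [CC_zero_right, AA_lt l (Nat.lt_succ_self j), Nat.cast_zero,
                mul_zero, zero_mul, add_zero] at h2
              refine (Finset.sum_congr rfl fun k _ => ?_).trans h2.symm
              push_cast
              ring
          _ = ∑ k ∈ range (j + 1), (((i : ℝ) + 1 - j) * (CC l (i + 1) k * AA l k j)
              + ((i : ℝ) + 1) * (CC l i k * AA l k j)) := by
              rw [← Finset.sum_add_distrib]
              exact Finset.sum_congr rfl fun k _ => by ring
          _ = ((i : ℝ) + 1 - j) * (∑ k ∈ range (j + 1), CC l (i + 1) k * AA l k j)
              + ((i : ℝ) + 1) * (∑ k ∈ range (j + 1), CC l i k * AA l k j) := by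
              rw [Finset.sum_add_distrib, ← Finset.mul_sum, ← Finset.mul_sum]
          _ = ((i : ℝ) + 1 - j) * (if i + 1 = j then 1 else 0)
              + ((i : ℝ) + 1) * (if i = j then 1 else 0) := by rw [ih, ih]
      have key2 : ((i : ℝ) + 1 - j) * (if i + 1 = j then (1 : ℝ) else 0)
          + ((i : ℝ) + 1) * (if i = j then (1 : ℝ) else 0)
          = ((j : ℝ) + 1) * (if i + 1 = j + 1 then (1 : ℝ) else 0) := by
        by_cases hij : i = j
        · subst hij
          rw [if_neg (show i + 1 ≠ i by omega), if_pos rfl, if_pos rfl]; ring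
        · rw [if_neg hij, if_neg (show i + 1 ≠ j + 1 by omega)]
          by_cases h : i + 1 = j
          · rw [if_pos h, ← h]; push_cast; ring
          · rw [if_neg h]; ring
      exact mul_left_cancel₀ hne (key.trans key2)

lemma dS1_eq_zero (l : ℝ) {j k : ℕ} (h : j < k) : dS1 l j k = 0 := by
  rw [dS1, coeff_pow_zero_of_lt (constL l) h, mul_zero]

lemma dS2_eq_zero (l : ℝ) {k i : ℕ} (h : k < i) : dS2 l k i = 0 := by
  rw [dS2, coeff_pow_zero_of_lt (constF l) h, mul_zero]

lemma orth (l : ℝ) (i j N : ℕ) (hj : j ≤ N) :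
    ∑ k ∈ range (N + 1), dS1 l j k * dS2 l k i = if i = j then 1 else 0 := by
  have hsub : range (j + 1) ⊆ range (N + 1) := by
    intro t ht; simp only [mem_range] at ht ⊢; omega
  rw [← Finset.sum_subset hsub (fun k hk hk2 => by
    simp only [mem_range] at hk hk2
    rw [dS1_eq_zero l (by omega), zero_mul])]
  calc ∑ k ∈ range (j + 1), dS1 l j k * dS2 l k i
      = ∑ k ∈ range (j + 1), (j ! : ℝ) / i ! * (CC l i k * AA l k j) := by
        refine Finset.sum_congr rfl fun k _ => ?_
        simp only [dS1, dS2, CC, AA]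
        have hk : (k ! : ℝ) ≠ 0 := by positivity
        field_simp
    _ = (j ! : ℝ) / i ! * (if i = j then 1 else 0) := by
        rw [← Finset.mul_sum, orthT]
    _ = if i = j then 1 else 0 := by
        by_cases h : i = j
        · subst h
          rw [if_pos rfl, mul_one, div_self (by positivity)]
        · rw [if_neg h, mul_zero]


theorem stmt12 (l : ℝ) (hl : l ≠ 0) (m : ℕ) (hm : 0 < m) (n : ℕ) (x : ℝ) :
    dDowling m l n x =
      ∑ k ∈ range (n + 1), (∑ j ∈ Icc k n, dS1 l j k * dW m l n j) * dBell l k x := by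
  have hBell : ∀ k ∈ range (n + 1), dBell l k x = ∑ i ∈ range (n + 1), dS2 l k i * dfall l x i := by
    intro k hk
    simp only [mem_range] at hk
    rw [dBell]
    refine Finset.sum_subset (by intro t ht; simp only [mem_range] at ht ⊢; omega) ?_
    intro i hi hi2
    simp only [mem_range] at hi hi2
    rw [dS2_eq_zero l (by omega), zero_mul]
  have hIcc : ∀ k ∈ range (n + 1), (∑ j ∈ Icc k n, dS1 l j k * dW m l n j)
      = ∑ j ∈ range (n + 1), dS1 l j k * dW m l n j := by
    intro k hk
    refine Finset.sum_subset ?_ ?_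
    · intro j hj; simp only [mem_Icc] at hj; simp only [mem_range]; omega
    · intro j hj hj2
      simp only [mem_range] at hj; simp only [mem_Icc] at hj2
      rw [dS1_eq_zero l (by omega), zero_mul]
  calc dDowling m l n x
      = ∑ j ∈ range (n + 1), ∑ i ∈ range (n + 1),
          (dW m l n j * dfall l x i) * (if i = j then 1 else 0) := by
        rw [dDowling]
        refine Finset.sum_congr rfl fun j hj => ?_
        rw [Finset.sum_eq_single_of_mem j hj (fun i _ hij => by rw [if_neg hij, mul_zero]),
          if_pos rfl, mul_one]
    _ = ∑ j ∈ range (n + 1), ∑ i ∈ range (n + 1),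
          (dW m l n j * dfall l x i) * ∑ k ∈ range (n + 1), dS1 l j k * dS2 l k i := by
        refine Finset.sum_congr rfl fun j hj => Finset.sum_congr rfl fun i hi => ?_
        simp only [mem_range] at hj
        rw [orth l i j n (by omega)]
    _ = ∑ j ∈ range (n + 1), ∑ i ∈ range (n + 1), ∑ k ∈ range (n + 1),
          (dS1 l j k * dW m l n j) * (dS2 l k i * dfall l x i) := by
        refine Finset.sum_congr rfl fun j _ => Finset.sum_congr rfl fun i _ => ?_
        rw [Finset.mul_sum]
        exact Finset.sum_congr rfl fun k _ => by ring
    _ = ∑ k ∈ range (n + 1), ∑ j ∈ range (n + 1), ∑ i ∈ range (n + 1),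
          (dS1 l j k * dW m l n j) * (dS2 l k i * dfall l x i) := by
        exact (Finset.sum_congr rfl fun j _ => Finset.sum_comm).trans Finset.sum_comm
    _ = ∑ k ∈ range (n + 1), (∑ j ∈ Icc k n, dS1 l j k * dW m l n j) * dBell l k x := by
        refine Finset.sum_congr rfl fun k hk => ?_
        rw [hBell k hk, hIcc k hk, Finset.sum_mul_sum]

end
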